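/- Fix β > 0, w > 0, and c ∈ ℝ, and define g : [0,∞) → ℝ by g(z) = 2z² − 6z^{3/2} + (4 + 2β)z − 2β w^{1/2} z^{1/2} − c. Then g is convex on [0,∞) if and only if β ≥ 27 / (16 w^{1/2}). (Equivalently, the second derivative 4 − (9/2) z^{−1/2} + (β w^{1/2} / 2) z^{−3/2} is nonnegative for all z > 0 if and only if β ≥ 27/(16 √w).) -/

import Mathlib

open Set

set_option maxHeartbeats 1000000 in
theorem convexity_criterion (β w c : ℝ) (hβ : 0 < β) (hw : 0 < w) :
    ConvexOn ℝ (Set.Ici (0:ℝ))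
        (fun z : ℝ => 2 * z ^ 2 - 6 * z ^ ((3:ℝ)/2) + (4 + 2 * β) * z
          - 2 * β * Real.sqrt w * Real.sqrt z - c) ↔
      27 / (16 * Real.sqrt w) ≤ β := by
  have hs : 0 < Real.sqrt w := Real.sqrt_pos.2 hw
  set s := Real.sqrt w with hs_def
  set f : ℝ → ℝ := fun z => 2 * z ^ 2 - 6 * (z * Real.sqrt z) + (4 + 2 * β) * z
      - 2 * β * s * Real.sqrt z - c with hf_def
  set f' : ℝ → ℝ := fun z => 4 * z - 9 * Real.sqrt z + (4 + 2 * β) - β * s / Real.sqrt z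
    with hf'_def
  set f'' : ℝ → ℝ := fun z => 4 - 9 / (2 * Real.sqrt z) + β * s / (2 * z * Real.sqrt z)
    with hf''_def
  have heq : EqOn (fun z : ℝ => 2 * z ^ 2 - 6 * z ^ ((3:ℝ)/2) + (4 + 2 * β) * z
          - 2 * β * s * Real.sqrt z - c) f (Ici 0) := by
    intro z hz
    simp only [mem_Ici] at hz
    have h32 : z ^ ((3:ℝ)/2) = z * Real.sqrt z := by
      rw [show ((3:ℝ)/2) = (1:ℝ) + (1/2 : ℝ) by norm_num,
        Real.rpow_add' hz (by norm_num), Real.rpow_one, ← Real.sqrt_eq_rpow]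
    simp only [hf_def, h32]
  have hcont : ContinuousOn f (Ici 0) := by
    apply Continuous.continuousOn
    fun_prop
  have hd : ∀ z : ℝ, 0 < z → HasDerivAt f (f' z) z := by
    intro z hz
    have hsz : 0 < Real.sqrt z := Real.sqrt_pos.2 hz
    have hzz : Real.sqrt z * Real.sqrt z = z := Real.mul_self_sqrt hz.le
    have h1 : HasDerivAt Real.sqrt (1 / (2 * Real.sqrt z)) z := Real.hasDerivAt_sqrt hz.ne'
    have h2 : HasDerivAt (fun z : ℝ => z * Real.sqrt z)
        (1 * Real.sqrt z + z * (1 / (2 * Real.sqrt z))) z := (hasDerivAt_id z).mul h1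
    have h := (((((hasDerivAt_pow 2 z).const_mul 2).sub (h2.const_mul 6)).add
        ((hasDerivAt_id z).const_mul (4 + 2 * β))).sub (h1.const_mul (2 * β * s))).sub_const c
    convert h using 1
    · rfl
    · rfl
    · rfl
    rw [hf'_def]
    push_cast
    set u := Real.sqrt z with hu
    rw [← hzz]
    field_simp
    ring
  have hd' : ∀ z : ℝ, 0 < z → HasDerivAt f' (f'' z) z := by
    intro z hz
    have hsz : 0 < Real.sqrt z := Real.sqrt_pos.2 hz
    have hzz : Real.sqrt z * Real.sqrt z = z := Real.mul_self_sqrt hz.le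
    have h1 : HasDerivAt Real.sqrt (1 / (2 * Real.sqrt z)) z := Real.hasDerivAt_sqrt hz.ne'
    have hD : HasDerivAt (fun z : ℝ => β * s / Real.sqrt z)
        ((0 * Real.sqrt z - β * s * (1 / (2 * Real.sqrt z))) / (Real.sqrt z) ^ 2) z :=
      (hasDerivAt_const z (β * s)).div h1 hsz.ne'
    have h := ((((hasDerivAt_id z).const_mul 4).sub (h1.const_mul 9)).add_const (4 + 2 * β)).sub hD
    convert h using 1
    · rfl
    · rfl
    · rfl
    rw [hf''_def]
    push_cast
    set u := Real.sqrt z with hu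
    rw [← hzz]
    field_simp
    ring
  constructor
  · -- convex → inequality
    intro hconv
    by_contra hlt
    push_neg at hlt
    have hβs : β * s < 27 / 16 := by
      rw [lt_div_iff₀ (by positivity)] at hlt
      nlinarith
    have hε : 0 < 27 / 16 - β * s := by linarith
    obtain ⟨δ, hδ, hδ4, hδ2⟩ :
        ∃ δ : ℝ, 0 < δ ∧ δ ≤ 1/4 ∧ δ ^ 2 ≤ (27 / 16 - β * s) / 11 := by
      refine ⟨min (1/4) (Real.sqrt ((27 / 16 - β * s) / 11)),
        lt_min (by norm_num) (Real.sqrt_pos.2 (by positivity)), min_le_left _ _, ?_⟩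
      have h1 : min (1/4) (Real.sqrt ((27 / 16 - β * s) / 11))
          ≤ Real.sqrt ((27 / 16 - β * s) / 11) := min_le_right _ _
      have h0 : (0:ℝ) ≤ min (1/4) (Real.sqrt ((27 / 16 - β * s) / 11)) :=
        le_min (by norm_num) (Real.sqrt_nonneg _)
      calc min (1/4) (Real.sqrt ((27 / 16 - β * s) / 11)) ^ 2
          ≤ (Real.sqrt ((27 / 16 - β * s) / 11)) ^ 2 := by nlinarith
        _ = (27 / 16 - β * s) / 11 := Real.sq_sqrt (by positivity)
    obtain ⟨a, b, ha, hb, hab, hsqa, hsqb⟩ :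
        ∃ a b : ℝ, 0 < a ∧ 0 < b ∧ a < b ∧ Real.sqrt a = 3/4 - δ ∧ Real.sqrt b = 3/4 + δ := by
      have h34 : 0 < 3/4 - δ := by linarith
      exact ⟨(3/4 - δ) ^ 2, (3/4 + δ) ^ 2, by positivity, by positivity, by nlinarith,
        Real.sqrt_sq (by linarith), Real.sqrt_sq (by linarith)⟩
    have hconvf : ConvexOn ℝ (Ici 0) f := hconv.congr heq
    have hconvIoi : ConvexOn ℝ (Ioi (0:ℝ)) f := hconvf.subset Ioi_subset_Ici_self (convex_Ioi 0)
    have hmono : f' a ≤ f' b := by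
      have h1 := hconvIoi.le_slope_of_hasDerivAt (mem_Ioi.2 ha) (mem_Ioi.2 hb) hab (hd a ha)
      have h2 := hconvIoi.slope_le_of_hasDerivAt (mem_Ioi.2 ha) (mem_Ioi.2 hb) hab (hd b hb)
      linarith
    have hanti : StrictAntiOn f' (Icc a b) := by
      apply strictAntiOn_of_deriv_neg (convex_Icc a b)
      · intro z hz
        exact ((hd' z (lt_of_lt_of_le ha hz.1)).differentiableAt.continuousAt).continuousWithinAt
      · rw [interior_Icc]
        intro z hz
        have hz0 : 0 < z := ha.trans hz.1
        rw [(hd' z hz0).deriv]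
        have hsz : 0 < Real.sqrt z := Real.sqrt_pos.2 hz0
        have hzz : Real.sqrt z * Real.sqrt z = z := Real.mul_self_sqrt hz0.le
        have hu1 : 3/4 - δ < Real.sqrt z := by
          rw [← hsqa]; exact Real.sqrt_lt_sqrt ha.le hz.1
        have hu2 : Real.sqrt z < 3/4 + δ := by
          rw [← hsqb]; exact Real.sqrt_lt_sqrt hz0.le hz.2
        set u := Real.sqrt z with hu_def
        have hkey : 8 * u ^ 3 - 9 * u ^ 2 + β * s < 0 := by
          have hsq : (u - 3/4) ^ 2 < δ ^ 2 := by
            nlinarith [mul_pos (by linarith : (0:ℝ) < δ - (u - 3/4))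
              (by linarith : (0:ℝ) < δ + (u - 3/4))]
          have h11 : 8 * u + 3 ≤ 11 := by linarith
          have hprod : (u - 3/4) ^ 2 * (8 * u + 3) < 27 / 16 - β * s := by
            calc (u - 3/4) ^ 2 * (8 * u + 3) ≤ (u - 3/4) ^ 2 * 11 :=
                mul_le_mul_of_nonneg_left h11 (sq_nonneg _)
              _ < ((27 / 16 - β * s) / 11) * 11 := by linarith [hsq, hδ2]
              _ = 27 / 16 - β * s := by ring
          have hid : 8 * u ^ 3 - 9 * u ^ 2 + β * s = (u - 3/4) ^ 2 * (8 * u + 3) - (27 / 16 - β * s) := by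
            ring
          linarith
        have hfz : f'' z = (8 * u ^ 3 - 9 * u ^ 2 + β * s) / (2 * u ^ 3) := by
          simp only [hf''_def, ← hu_def]
          rw [← hzz]
          field_simp
          ring
        rw [hfz]
        exact div_neg_of_neg_of_pos hkey (by positivity)
    have : f' b < f' a := hanti (left_mem_Icc.2 hab.le) (right_mem_Icc.2 hab.le) hab
    linarith
  · -- inequality → convex
    intro h27
    have hβs : 27 / 16 ≤ β * s := by
      rw [div_le_iff₀ (by positivity)] at h27
      nlinarith
    have hconvf : ConvexOn ℝ (Ici 0) f := by
      apply convexOn_of_hasDerivWithinAt2_nonneg (convex_Ici 0) hcont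
        (f' := f') (f'' := f'')
      · rw [interior_Ici]; exact fun x hx => (hd x hx).hasDerivWithinAt
      · rw [interior_Ici]; exact fun x hx => (hd' x hx).hasDerivWithinAt
      · rw [interior_Ici]
        intro x hx
        have hx0 : (0:ℝ) < x := hx
        have hsx : 0 < Real.sqrt x := Real.sqrt_pos.2 hx0
        have hxx : Real.sqrt x * Real.sqrt x = x := Real.mul_self_sqrt hx0.le
        set u := Real.sqrt x with hu_def
        have hkey : 0 ≤ 8 * u ^ 3 - 9 * u ^ 2 + β * s := by
          nlinarith [mul_nonneg (sq_nonneg (u - 3/4)) (by linarith : (0:ℝ) ≤ 8 * u + 3)]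
        have hfz : f'' x = (8 * u ^ 3 - 9 * u ^ 2 + β * s) / (2 * u ^ 3) := by
          simp only [hf''_def, ← hu_def]
          rw [← hxx]
          field_simp
          ring
        rw [hfz]
        exact div_nonneg hkey (by positivity)
    exact hconvf.congr heq.symm
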